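/- Let (E,ℒ) be a labeled graph satisfying the standing assumptions with ℰ the smallest normal accommodating set, let A ∈ ℰ be minimal, and let (α,A) be a loop with no exit (equivalently, A = r(A,α) and ℒ(AE^{|α|}) = {α}). Then: (1) ℒ(AE^{≥1}) = {α^k α′ : k ≥ 0, α′ an initial path of α}; (2) for every 1 ≤ i ≤ |α|, the relative range r(A, α_{[1,i]}) is minimal in ℰ; (3) if moreover |α| ≤ |β| for every loop (β,A), then the sets r(A, α_{[1,i]}), 1 ≤ i ≤ |α|, are pairwise disjoint. -/
import Mathlib


/-- The `n`-fold concatenation (power) `w^n` of a finite word `w`. -/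
def wpow {Λ : Type*} (w : List Λ) (n : ℕ) : List Λ := (List.replicate n w).flatten

/-- The finite word `x_{[1,n]}` formed by the first `n` letters of an infinite word `x`. -/
def wordPrefix {Λ : Type*} (x : ℕ → Λ) (n : ℕ) : List Λ := (List.range n).map x

/-- A labeled graph `(E, ℒ)`: a directed graph with vertex set `V` and edge type `Edge`
(with range and source maps), together with a surjective labeling map `lbl` onto the
alphabet `Λ`. -/
structure LabeledGraph (V : Type*) (Λ : Type*) where
  Edge : Type*
  src : Edge → V
  rng : Edge → V
  lbl : Edge → Λ
  lbl_surjective : Function.Surjective lbl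

namespace LabeledGraph

variable {V : Type*} {Λ : Type*}

/-- `G.PathLabel u w α` holds iff there is a finite path `λ` of length `≥ 1` in the graph
with source `u`, range `w` and label word `ℒ(λ) = α`. -/
inductive PathLabel (G : LabeledGraph V Λ) : V → V → List Λ → Prop
  | single (e : G.Edge) : PathLabel G (G.src e) (G.rng e) [G.lbl e]
  | cons (e : G.Edge) {w : V} {α : List Λ} :
      PathLabel G (G.rng e) w α → PathLabel G (G.src e) w (G.lbl e :: α)

variable (G : LabeledGraph V Λ)

/-- `α ∈ ℒ*(E)`: `α` is the label of some path of length `≥ 1`. -/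
def IsLabel (α : List Λ) : Prop := ∃ u w, G.PathLabel u w α

/-- The relative range `r(A, α)` of `α` with respect to `A`. -/
def rel (A : Set V) (α : List Λ) : Set V := {w | ∃ u ∈ A, G.PathLabel u w α}

/-- `r(α) = r(E⁰, α)`. -/
def range' (α : List Λ) : Set V := G.rel Set.univ α

/-- `s(α)`: the set of sources of paths labeled `α`. -/
def srcSet (α : List Λ) : Set V := {u | ∃ w, G.PathLabel u w α}

/-- `ℒ(AEⁿ)`: labels of paths of length `n` with source in `A`. -/
def lblFrom (A : Set V) (n : ℕ) : Set (List Λ) :=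
  {α | α.length = n ∧ ∃ u ∈ A, ∃ w, G.PathLabel u w α}

/-- `ℒ(AE^{≥1})`: labels of paths of length `≥ 1` with source in `A`. -/
def lblFromGe (A : Set V) : Set (List Λ) := {α | ∃ u ∈ A, ∃ w, G.PathLabel u w α}

/-- `ℒ(EⁿA)`: labels of paths of length `n` with range in `A`. -/
def lblTo (A : Set V) (n : ℕ) : Set (List Λ) :=
  {α | α.length = n ∧ ∃ u, ∃ w ∈ A, G.PathLabel u w α}

/-- The generalized vertex `[v]_l`: the set of vertices `w` receiving at least one edge
such that `ℒ(E^k w) = ℒ(E^k v)` for all `1 ≤ k ≤ l`. -/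
def gv (v : V) (l : ℕ) : Set V :=
  {w | (∃ e : G.Edge, G.rng e = w) ∧
    ∀ k : ℕ, 1 ≤ k → k ≤ l → G.lblTo {w} k = G.lblTo {v} k}

/-- Membership in `ℰ`, the smallest collection of subsets of `E⁰` containing all ranges
`r(α)` and closed under relative ranges, finite intersections, finite unions and
relative complements (the smallest normal accommodating set). -/
inductive memE : Set V → Prop
  | empty : memE ∅
  | range (α : List Λ) : α ≠ [] → memE (G.range' α)
  | relRange {A : Set V} (α : List Λ) : α ≠ [] → memE A → memE (G.rel A α)
  | inter {A C : Set V} : memE A → memE C → memE (A ∩ C)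
  | union {A C : Set V} : memE A → memE C → memE (A ∪ C)
  | diff {A C : Set V} : memE A → memE C → memE (A \ C)

/-- The standing assumptions on the labeled space `(E, ℒ, ℰ)`: the graph has no sinks and
the labeled space is weakly left-resolving, set-finite and receiver set-finite. -/
structure Standing : Prop where
  no_sinks : ∀ u : V, ∃ e : G.Edge, G.src e = u
  weakly_left_resolving : ∀ A C : Set V, G.memE A → G.memE C →
    ∀ α : List Λ, α ≠ [] → G.rel (A ∩ C) α = G.rel A α ∩ G.rel C α
  set_finite : ∀ A : Set V, G.memE A → ∀ k : ℕ, 1 ≤ k → (G.lblFrom A k).Finite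
  receiver_set_finite : ∀ A : Set V, G.memE A → ∀ k : ℕ, 1 ≤ k → (G.lblTo A k).Finite

/-- `α` is agreeable for `[v]_l` (the condition only depends on `l`):
`α = βα' = α'γ` with `α', β, γ ∈ ℒ*(E)` and `|β| = |γ| ≤ l`. -/
def Agreeable (l : ℕ) (α : List Λ) : Prop :=
  ∃ α' β γ : List Λ, G.IsLabel α' ∧ G.IsLabel β ∧ G.IsLabel γ ∧
    β.length = γ.length ∧ β.length ≤ l ∧ α = β ++ α' ∧ α = α' ++ γ

/-- `α` (a path with `s(α) ∩ [v]_l ≠ ∅`) is disagreeable for `[v]_l`. -/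
def DisagreeableFor (v : V) (l : ℕ) (α : List Λ) : Prop :=
  (G.srcSet α ∩ G.gv v l).Nonempty ∧ ¬ G.Agreeable l α

/-- The generalized vertex `[v]_l` is disagreeable: there is `N ≥ 1` such that for every
`n > N` there is a path in `ℒ(E^{≥n})` which is disagreeable for `[v]_l`. -/
def DisagreeableGV (v : V) (l : ℕ) : Prop :=
  ∃ N : ℕ, 1 ≤ N ∧ ∀ n : ℕ, N < n →
    ∃ α : List Λ, n ≤ α.length ∧ G.DisagreeableFor v l α

/-- The labeled space `(E, ℒ, ℰ)` is disagreeable. -/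
def Disagreeable : Prop :=
  ∀ v : V, ∃ L : ℕ, 1 ≤ L ∧ ∀ l : ℕ, L ≤ l → G.DisagreeableGV v l

/-- `(α, A)` is a loop: `A ∈ ℰ` is nonempty, `α ∈ ℒ*(E)` and `A ⊆ r(A, α)`. -/
def IsLoop (α : List Λ) (A : Set V) : Prop :=
  α ≠ [] ∧ G.memE A ∧ A.Nonempty ∧ A ⊆ G.rel A α

/-- The loop `(α, A)` has an exit: either (i) there is `β ∈ ℒ(AE^{|α|})` with `β ≠ α` and
`r(A, β) ≠ ∅`, or (ii) `A ⊊ r(A, α)`. -/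
def HasExit (α : List Λ) (A : Set V) : Prop :=
  (∃ β : List Λ, β ∈ G.lblFrom A α.length ∧ β ≠ α ∧ (G.rel A β).Nonempty) ∨
    A ⊂ G.rel A α

/-- `A ∈ ℰ` is minimal: `A ≠ ∅` and `A ∩ C ∈ {A, ∅}` for every `C ∈ ℰ`. -/
def MinimalSet (A : Set V) : Prop :=
  G.memE A ∧ A.Nonempty ∧ ∀ C : Set V, G.memE C → A ∩ C = A ∨ A ∩ C = ∅

/-- A set `Bset ⊆ E⁰` connects to a loop: there are a loop `(α, A)` and finitely many
paths `δ₁, …, δ_m ∈ ℒ*(E)`, none of which is an initial path of another, with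
`A ⊆ ∪ᵢ r(Bset, δᵢ)`. -/
def ConnectsToLoop (Bset : Set V) : Prop :=
  ∃ (α : List Λ) (A : Set V), G.IsLoop α A ∧
    ∃ (m : ℕ) (δ : Fin m → List Λ), (∀ i, G.IsLabel (δ i)) ∧
      (∀ i j, i ≠ j → ¬ (δ i <+: δ j)) ∧ A ⊆ ⋃ i, G.rel Bset (δ i)

/-- Every vertex connects to a loop: every generalized vertex `[v]_l` connects to a loop. -/
def EveryVertexConnectsToLoop : Prop :=
  ∀ (v : V) (l : ℕ), 1 ≤ l → (∃ e : G.Edge, G.rng e = v) →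
    G.ConnectsToLoop (G.gv v l)

/-- The labeled space `(E, ℒ, ℰ)` is strongly cofinal. -/
def StronglyCofinal : Prop :=
  ∀ x : ℕ → Λ, (∀ n : ℕ, 1 ≤ n → G.IsLabel (wordPrefix x n)) →
    ∀ (v : V) (l : ℕ), (∃ e : G.Edge, G.rng e = v) → 1 ≤ l →
      ∃ N : ℕ, 1 ≤ N ∧ ∃ (m : ℕ) (lam : Fin m → List Λ),
        (∀ i, G.IsLabel (lam i)) ∧
        G.range' (wordPrefix x N) ⊆ ⋃ i, G.rel (G.gv v l) (lam i)

/-- A subset `H ⊆ ℰ` is hereditary: it is closed under finite unions, relative ranges,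
and subsets belonging to `ℰ`. -/
def IsHereditary (H : Set (Set V)) : Prop :=
  (∀ A ∈ H, G.memE A) ∧
  (∀ A ∈ H, ∀ C ∈ H, A ∪ C ∈ H) ∧
  (∀ A ∈ H, ∀ β : List Λ, G.IsLabel β → G.rel A β ∈ H) ∧
  (∀ A ∈ H, ∀ C : Set V, G.memE C → C ⊆ A → C ∈ H)

/-- A subset `H ⊆ ℰ` is saturated: every `A ∈ ℰ` with `r(A, β) ∈ H` for all
`β ∈ ℒ*(E)` belongs to `H`. -/
def IsSaturated (H : Set (Set V)) : Prop :=
  ∀ A : Set V, G.memE A → (∀ β : List Λ, G.IsLabel β → G.rel A β ∈ H) → A ∈ H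

end LabeledGraph


namespace LabeledGraph

variable {V Λ : Type*} {G : LabeledGraph V Λ}

lemma PathLabel.ne_nil {u w : V} {β : List Λ} (h : G.PathLabel u w β) : β ≠ [] := by
  cases h <;> simp

lemma PathLabel.append : ∀ {u v w : V} {β γ : List Λ},
    G.PathLabel u v β → G.PathLabel v w γ → G.PathLabel u w (β ++ γ)
  | _, _, _, _, _, .single e, h2 => by simpa using PathLabel.cons e h2
  | _, _, _, _, _, .cons e h, h2 => by simpa using PathLabel.cons e (h.append h2)

lemma PathLabel.split' : ∀ {u w : V} {δ : List Λ}, G.PathLabel u w δ →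
    ∀ β γ : List Λ, δ = β ++ γ → β ≠ [] → γ ≠ [] →
    ∃ v, G.PathLabel u v β ∧ G.PathLabel v w γ := by
  intro u w δ h
  induction h with
  | single e =>
    intro β γ heq hβ hγ
    exfalso
    have := congrArg List.length heq
    simp at this
    rcases β with _ | ⟨b, β'⟩ <;> rcases γ with _ | ⟨c, γ'⟩ <;> simp_all
  | cons e h ih =>
    intro β γ heq hβ hγ
    rcases β with _ | ⟨b, β'⟩
    · exact absurd rfl hβ
    · simp only [List.cons_append, List.cons.injEq] at heq
      obtain ⟨rfl, heq2⟩ := heq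
      rcases eq_or_ne β' [] with rfl | hβ'
      · subst heq2
        exact ⟨G.rng e, PathLabel.single e, by simpa using h⟩
      · obtain ⟨v, h1, h2⟩ := ih β' γ heq2 hβ' hγ
        exact ⟨v, PathLabel.cons e h1, h2⟩

lemma PathLabel.split {u w : V} {β γ : List Λ} (h : G.PathLabel u w (β ++ γ))
    (hβ : β ≠ []) (hγ : γ ≠ []) : ∃ v, G.PathLabel u v β ∧ G.PathLabel v w γ :=
  h.split' β γ rfl hβ hγ

lemma rel_comp (B : Set V) {β γ : List Λ} (hβ : β ≠ []) (hγ : γ ≠ []) :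
    G.rel (G.rel B β) γ = G.rel B (β ++ γ) := by
  ext w
  constructor
  · rintro ⟨v, ⟨u, hu, h1⟩, h2⟩
    exact ⟨u, hu, h1.append h2⟩
  · rintro ⟨u, hu, h⟩
    obtain ⟨v, h1, h2⟩ := h.split hβ hγ
    exact ⟨v, ⟨u, hu, h1⟩, h2⟩

end LabeledGraph

lemma wpow_zero {Λ : Type*} (w : List Λ) : wpow w 0 = [] := rfl

lemma wpow_succ {Λ : Type*} (w : List Λ) (k : ℕ) : wpow w (k+1) = w ++ wpow w k := by
  simp [wpow, List.replicate_succ]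

/-- Lemma 4.3 (structure of a loop with no exit on a minimal set): if `A ∈ ℰ` is minimal
and `(α, A)` is a loop with no exit, then (1) `ℒ(AE^{≥1}) = {αᵏα' : k ≥ 0, α'` an
initial path of `α}`; (2) each relative range `r(A, α_{[1,i]})`, `1 ≤ i ≤ |α|`, is
minimal in `ℰ`; (3) if moreover `α` has the smallest length among all loops at `A`, these
relative ranges are pairwise disjoint. -/
theorem stmt_10 {V : Type*} {Λ : Type*} [Countable V] [Countable Λ]
    (G : LabeledGraph V Λ) [Countable G.Edge] (hS : G.Standing)
    (A : Set V) (hA : G.MinimalSet A) (α : List Λ)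
    (hloop : G.IsLoop α A) (hnoexit : ¬ G.HasExit α A) :
    (G.lblFromGe A =
      {w : List Λ | w ≠ [] ∧ ∃ (k : ℕ) (α' : List Λ), α' <+: α ∧ w = wpow α k ++ α'}) ∧
    (∀ i : ℕ, 1 ≤ i → i ≤ α.length → G.MinimalSet (G.rel A (α.take i))) ∧
    ((∀ β : List Λ, G.IsLoop β A → α.length ≤ β.length) →
      ∀ i j : ℕ, 1 ≤ i → i ≤ α.length → 1 ≤ j → j ≤ α.length → i ≠ j →
        G.rel A (α.take i) ∩ G.rel A (α.take j) = ∅) := by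
  classical
  obtain ⟨hαne, hAE, hAne, hAsub⟩ := hloop
  have hαlen : 1 ≤ α.length := List.length_pos_iff.mpr hαne
  have hno1 : ∀ β, β ∈ G.lblFrom A α.length → β ≠ α → ¬(G.rel A β).Nonempty := by
    intro β h1 h2 h3
    exact hnoexit (Or.inl ⟨β, h1, h2, h3⟩)
  have hno2 : ¬ A ⊂ G.rel A α := fun h => hnoexit (Or.inr h)
  have hAeq : G.rel A α = A := by
    by_contra hne
    exact hno2 (hAsub.ssubset_of_ne (Ne.symm hne))
  have huniq : ∀ β : List Λ, β.length = α.length →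
      (∃ u ∈ A, ∃ w, G.PathLabel u w β) → β = α := by
    intro β hlen hex
    by_contra hne
    obtain ⟨u, hu, w, hp⟩ := hex
    exact (hno1 β ⟨hlen, u, hu, w, hp⟩ hne) ⟨w, u, hu, hp⟩
  have htake_ne : ∀ i : ℕ, 1 ≤ i → α.take i ≠ [] := by
    intro i hi
    apply List.ne_nil_of_length_pos
    simp [List.length_take]
    omega
  have hdrop_ne : ∀ i : ℕ, i < α.length → α.drop i ≠ [] := by
    intro i hi
    apply List.ne_nil_of_length_pos
    simp [List.length_drop]
    omega
  have hext : ∀ m : ℕ, ∀ v : V, 1 ≤ m →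
      ∃ z, ∃ δ : List Λ, δ.length = m ∧ G.PathLabel v z δ := by
    intro m
    induction m with
    | zero => intro v h; omega
    | succ n ih =>
      intro v _
      obtain ⟨e, he⟩ := hS.no_sinks v
      rcases Nat.eq_zero_or_pos n with rfl | hn
      · exact ⟨G.rng e, [G.lbl e], rfl, he ▸ LabeledGraph.PathLabel.single e⟩
      · obtain ⟨z, δ, hl, hp⟩ := ih (G.rng e) hn
        exact ⟨z, G.lbl e :: δ, by simp [hl], he ▸ LabeledGraph.PathLabel.cons e hp⟩
  have key : ∀ n : ℕ, ∀ w : List Λ, w.length = n → (∃ u ∈ A, ∃ z, G.PathLabel u z w) →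
      ∃ k α', α' <+: α ∧ w = wpow α k ++ α' := by
    intro n
    induction n using Nat.strong_induction_on with
    | _ n ih =>
      rintro w hlen ⟨u, hu, z, hp⟩
      rcases le_or_gt w.length α.length with hle | hlt
      · rcases eq_or_lt_of_le hle with heq | hlt2
        · have hwα := huniq w heq ⟨u, hu, z, hp⟩
          exact ⟨0, α, List.prefix_refl α, by simp [wpow_zero, hwα]⟩
        · obtain ⟨z', δ, hδlen, hpδ⟩ := hext (α.length - w.length) z (by omega)
          have hfull : G.PathLabel u z' (w ++ δ) := hp.append hpδ
          have heq2 := huniq (w ++ δ) (by simp [hδlen]; omega) ⟨u, hu, z', hfull⟩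
          exact ⟨0, w, ⟨δ, heq2⟩, by simp [wpow_zero]⟩
      · have hw : w = w.take α.length ++ w.drop α.length := (List.take_append_drop _ _).symm
        have hp' : G.PathLabel u z (w.take α.length ++ w.drop α.length) := by
          rw [← hw]; exact hp
        obtain ⟨v, h1, h2⟩ := hp'.split
          (by apply List.ne_nil_of_length_pos; simp [List.length_take]; omega)
          (by apply List.ne_nil_of_length_pos; simp [List.length_drop]; omega)
        have h1α : w.take α.length = α := huniq _ (by simp [List.length_take]; omega) ⟨u, hu, v, h1⟩
        have hvA : v ∈ A := by
          rw [← hAeq]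
          refine ⟨u, hu, ?_⟩
          rw [← h1α]
          exact h1
        obtain ⟨k, α', hpre, heq3⟩ :=
          ih (w.drop α.length).length (by simp [List.length_drop]; omega) _ rfl ⟨v, hvA, z, h2⟩
        refine ⟨k+1, α', hpre, ?_⟩
        calc w = w.take α.length ++ w.drop α.length := hw
          _ = α ++ (wpow α k ++ α') := by rw [h1α, heq3]
          _ = wpow α (k+1) ++ α' := by rw [wpow_succ]; simp
  have hαpath : ∃ u ∈ A, ∃ v ∈ A, G.PathLabel u v α := by
    obtain ⟨v, hv⟩ := hAne
    obtain ⟨u, hu, hp⟩ := hAsub hv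
    exact ⟨u, hu, v, hv, hp⟩
  have hback : ∀ k : ℕ, ∀ v ∈ A, ∃ u ∈ A, G.PathLabel u v (wpow α (k+1)) := by
    intro k
    induction k with
    | zero =>
      intro v hv
      obtain ⟨u, hu, hp⟩ := hAsub hv
      exact ⟨u, hu, by rw [wpow_succ, wpow_zero]; simpa using hp⟩
    | succ n ih =>
      intro v hv
      obtain ⟨u, hu, hp⟩ := ih v hv
      obtain ⟨u', hu', hp'⟩ := hAsub hu
      exact ⟨u', hu', by rw [wpow_succ]; exact hp'.append hp⟩
  have hmem2 : ∀ (k : ℕ) (α' : List Λ), α' <+: α → wpow α k ++ α' ≠ [] →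
      ∃ u ∈ A, ∃ z, G.PathLabel u z (wpow α k ++ α') := by
    intro k α' hpre hne
    rcases eq_or_ne α' [] with rfl | hα'
    · rcases Nat.eq_zero_or_pos k with rfl | hk
      · simp [wpow_zero] at hne
      · obtain ⟨v, hv⟩ := hAne
        obtain ⟨u, hu, hp⟩ := hback (k-1) v hv
        rw [Nat.sub_add_cancel hk] at hp
        exact ⟨u, hu, v, by simpa using hp⟩
    · obtain ⟨u0, hu0, v0, hv0, hpα⟩ := hαpath
      obtain ⟨t, ht⟩ := hpre
      have hα'path : ∃ m, G.PathLabel u0 m α' := by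
        rcases eq_or_ne t [] with rfl | htne
        · refine ⟨v0, ?_⟩
          have : α' = α := by simpa using ht
          rw [this]; exact hpα
        · have hp2 : G.PathLabel u0 v0 (α' ++ t) := by rw [ht]; exact hpα
          obtain ⟨m, h1, h2⟩ := hp2.split hα' htne
          exact ⟨m, h1⟩
      obtain ⟨m, hm⟩ := hα'path
      rcases Nat.eq_zero_or_pos k with rfl | hk
      · exact ⟨u0, hu0, m, by simpa [wpow_zero] using hm⟩
      · obtain ⟨u1, hu1, hp1⟩ := hback (k-1) u0 hu0
        rw [Nat.sub_add_cancel hk] at hp1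
        exact ⟨u1, hu1, m, hp1.append hm⟩
  have part1 : G.lblFromGe A =
      {w : List Λ | w ≠ [] ∧ ∃ (k : ℕ) (α' : List Λ), α' <+: α ∧ w = wpow α k ++ α'} := by
    ext w
    constructor
    · rintro ⟨u, hu, z, hp⟩
      exact ⟨hp.ne_nil, key w.length w rfl ⟨u, hu, z, hp⟩⟩
    · rintro ⟨hne, k, α', hpre, rfl⟩
      exact hmem2 k α' hpre hne
  have hAi_mem : ∀ i : ℕ, 1 ≤ i → G.memE (G.rel A (α.take i)) := by
    intro i hi
    exact LabeledGraph.memE.relRange _ (htake_ne i hi) hAE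
  have hAi_ne : ∀ i : ℕ, 1 ≤ i → i ≤ α.length → (G.rel A (α.take i)).Nonempty := by
    intro i h1 h2
    obtain ⟨u, hu, v, hv, hp⟩ := hαpath
    rcases eq_or_lt_of_le h2 with heq | h3
    · subst heq
      rw [List.take_length]
      exact ⟨v, u, hu, hp⟩
    · have hp' : G.PathLabel u v (α.take i ++ α.drop i) := by
        rw [List.take_append_drop]; exact hp
      obtain ⟨m, hm1, hm2⟩ := hp'.split (htake_ne i h1) (hdrop_ne i h3)
      exact ⟨m, u, hu, hm1⟩
  have hemit : ∀ i : ℕ, 1 ≤ i → i < α.length → ∀ v ∈ G.rel A (α.take i),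
      ∃ z, G.PathLabel v z (α.drop i) := by
    intro i h1 h2 v hv
    obtain ⟨u, hu, hp⟩ := hv
    obtain ⟨z, δ, hδlen, hpδ⟩ := hext (α.length - i) v (by omega)
    have hfull := huniq (α.take i ++ δ)
      (by simp [List.length_take, hδlen]; omega) ⟨u, hu, z, hp.append hpδ⟩
    have hδeq : δ = α.drop i := by
      have h3 : α.take i ++ δ = α.take i ++ α.drop i := by
        rw [hfull, List.take_append_drop]
      exact List.append_cancel_left h3
    exact ⟨z, hδeq ▸ hpδ⟩
  have hK : ∀ i : ℕ, 1 ≤ i → i ≤ α.length → ∀ B : Set V, G.memE B → B.Nonempty →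
      B ⊆ G.rel A (α.take i) →
      G.rel B (α.drop i ++ α.take i) = G.rel A (α.take i) := by
    intro i h1 h2 B hBE hBne hBsub
    rcases eq_or_lt_of_le h2 with heq | h3
    · subst heq
      rw [List.take_length] at hBsub ⊢
      rw [List.drop_length]
      have hBA : B ⊆ A := by rwa [hAeq] at hBsub
      have hBeq : B = A := by
        rcases hA.2.2 B hBE with h | h
        · refine Set.Subset.antisymm hBA ?_
          rw [← h]
          exact Set.inter_subset_right
        · exfalso
          obtain ⟨b, hb⟩ := hBne
          have : b ∈ A ∩ B := ⟨hBA hb, hb⟩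
          rw [h] at this
          exact this
      rw [hBeq]
      rw [List.nil_append]
    · have hsubA : G.rel B (α.drop i) ⊆ A := by
        rintro w ⟨b, hb, hpb⟩
        obtain ⟨u, hu, hpu⟩ := hBsub hb
        rw [← hAeq]
        have := hpu.append hpb
        rw [List.take_append_drop] at this
        exact ⟨u, hu, this⟩
      have hBγne : (G.rel B (α.drop i)).Nonempty := by
        obtain ⟨b, hb⟩ := hBne
        obtain ⟨z, hz⟩ := hemit i h1 h3 b (hBsub hb)
        exact ⟨z, b, hb, hz⟩
      have hBγE : G.memE (G.rel B (α.drop i)) :=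
        LabeledGraph.memE.relRange _ (hdrop_ne i h3) hBE
      have hBγA : G.rel B (α.drop i) = A := by
        rcases hA.2.2 _ hBγE with h | h
        · refine Set.Subset.antisymm hsubA ?_
          rw [← h]
          exact Set.inter_subset_right
        · exfalso
          obtain ⟨x, hx⟩ := hBγne
          have : x ∈ A ∩ G.rel B (α.drop i) := ⟨hsubA hx, hx⟩
          rw [h] at this
          exact this
      rw [← LabeledGraph.rel_comp B (hdrop_ne i h3) (htake_ne i h1), hBγA]
  have part2 : ∀ i : ℕ, 1 ≤ i → i ≤ α.length → G.MinimalSet (G.rel A (α.take i)) := by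
    intro i h1 h2
    refine ⟨hAi_mem i h1, hAi_ne i h1 h2, fun C hC => ?_⟩
    rcases eq_or_ne (G.rel A (α.take i) ∩ C) ∅ with h | h
    · exact Or.inr h
    left
    rcases eq_or_ne (G.rel A (α.take i) \ C) ∅ with hd | hd
    · rw [Set.inter_eq_left]
      rwa [Set.diff_eq_empty] at hd
    exfalso
    have hrot_ne : α.drop i ++ α.take i ≠ [] := by
      simp [htake_ne i h1]
    have e1 := hK i h1 h2 _ (LabeledGraph.memE.inter (hAi_mem i h1) hC)
      (Set.nonempty_iff_ne_empty.mpr h) Set.inter_subset_left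
    have e2 := hK i h1 h2 _ (LabeledGraph.memE.diff (hAi_mem i h1) hC)
      (Set.nonempty_iff_ne_empty.mpr hd) Set.diff_subset
    have hwlr := hS.weakly_left_resolving _ _
      (LabeledGraph.memE.inter (hAi_mem i h1) hC)
      (LabeledGraph.memE.diff (hAi_mem i h1) hC) _ hrot_ne
    rw [e1, e2, Set.inter_self] at hwlr
    have hdisj : (G.rel A (α.take i) ∩ C) ∩ (G.rel A (α.take i) \ C) = ∅ := by
      ext x
      simp only [Set.mem_inter_iff, Set.mem_diff, Set.mem_empty_iff_false, iff_false]
      tauto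
    rw [hdisj] at hwlr
    have hrel0 : G.rel (∅ : Set V) (α.drop i ++ α.take i) = ∅ := by
      ext x
      simp [LabeledGraph.rel]
    rw [hrel0] at hwlr
    obtain ⟨x, hx⟩ := hAi_ne i h1 h2
    rw [← hwlr] at hx
    exact hx
  have part3aux : ∀ i j : ℕ, 1 ≤ i → 1 ≤ j → i < j → j ≤ α.length →
      (∀ β : List Λ, G.IsLoop β A → α.length ≤ β.length) →
      G.rel A (α.take i) ∩ G.rel A (α.take j) = ∅ := by
    intro i j hi hj hij hjle hshort
    by_contra hne
    have hiA : i ≤ α.length := le_trans (le_of_lt hij) hjle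
    have hne' : (G.rel A (α.take i) ∩ G.rel A (α.take j)).Nonempty :=
      Set.nonempty_iff_ne_empty.mpr hne
    obtain ⟨-, -, hmi⟩ := part2 i hi hiA
    obtain ⟨-, -, hmj⟩ := part2 j hj hjle
    have hij1 : G.rel A (α.take i) ⊆ G.rel A (α.take j) := by
      rcases hmi _ (hAi_mem j hj) with h | h
      · rw [← h]
        exact Set.inter_subset_right
      · exact absurd h (Set.nonempty_iff_ne_empty.mp hne')
    have hij2 : G.rel A (α.take j) ⊆ G.rel A (α.take i) := by
      rcases hmj _ (hAi_mem i hi) with h | h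
      · rw [← h]
        exact Set.inter_subset_right
      · exfalso
        rw [Set.inter_comm] at h
        exact (Set.nonempty_iff_ne_empty.mp hne') h
    have heqij : G.rel A (α.take i) = G.rel A (α.take j) :=
      Set.Subset.antisymm hij1 hij2
    rcases eq_or_lt_of_le hjle with hj2 | hj2
    · have hAj : G.rel A (α.take j) = A := by rw [hj2, List.take_length, hAeq]
      have hloop2 : G.IsLoop (α.take i) A := by
        refine ⟨htake_ne i hi, hAE, hAne, ?_⟩
        rw [heqij, hAj]
      have hlb := hshort _ hloop2
      simp [List.length_take] at hlb
      omega
    · have hdropj_ne : α.drop j ≠ [] := hdrop_ne j hj2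
      have hloop2 : G.IsLoop (α.take i ++ α.drop j) A := by
        refine ⟨by simp [htake_ne i hi], hAE, hAne, ?_⟩
        have hrw : G.rel A (α.take i ++ α.drop j) = A := by
          rw [← LabeledGraph.rel_comp A (htake_ne i hi) hdropj_ne, heqij,
            LabeledGraph.rel_comp A (htake_ne j hj) hdropj_ne,
            List.take_append_drop, hAeq]
        rw [hrw]
      have hlb := hshort _ hloop2
      simp [List.length_take, List.length_drop] at hlb
      omega
  refine ⟨part1, part2, fun hshort i j hi hile hj hjle hne => ?_⟩
  rcases lt_or_gt_of_ne hne with h | h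
  · exact part3aux i j hi hj h hjle hshort
  · rw [Set.inter_comm]
    exact part3aux j i hj hi h hile hshort
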